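/- A retract of a free category (a category free on a directed graph) is free: if A is a category, F a free category on a graph, and there are functors I : A → F and R : F → A with R ∘ I = 1_A, then A is free on some graph. -/

import Mathlib

/-!
STATEMENT 14: A retract of a free category is free: if `A` is a category, `Paths G` the free
category on a directed graph (quiver) `G`, and there are functors `I : A ⥤ Paths G` and
`R : Paths G ⥤ A` with `I ⋙ R = 𝟭 A`, then `A` is isomorphic (in `Cat`) to the free
category on some graph.
-/

open CategoryTheory

universe u

namespace RetractFreeAux

variable {A : Type u} [Category.{u} A] {G : Type u} [Quiver.{u} G]


lemma path_eq_eqToHom {a b : Paths G} (p : a ⟶ b) (hp : p.length = 0) :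
    ∃ e : a = b, p = eqToHom e := by
  cases p using Quiver.Path.casesOn with
  | nil => exact ⟨rfl, rfl⟩
  | cons p e => simp [Quiver.Path.length] at hp

lemma path_suffix : ∀ {b c : G} (s : Quiver.Path b c) {a b' : G} (t : Quiver.Path b' c)
    (p : Quiver.Path a b) (q : Quiver.Path a b'),
    s.length ≤ t.length → p.comp s = q.comp t →
    ∃ w : Quiver.Path b' b, t = w.comp s ∧ p = q.comp w := by
  intro b c s
  induction s with
  | nil =>
    intro a b' t p q _ hpq
    exact ⟨t, by simp, by simpa using hpq⟩
  | @cons c₀ c₁ s e ih =>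
    intro a b' t p q hl hpq
    cases t with
    | nil => simp at hl
    | @cons d₀ d₁ t f =>
      rw [Quiver.Path.comp_cons, Quiver.Path.comp_cons] at hpq
      simp only [Quiver.Path.cons.injEq] at hpq
      obtain ⟨rfl, hpq1, hef⟩ := hpq
      obtain rfl := hef.eq
      obtain ⟨w, rfl, hp⟩ := ih t p q (Nat.succ_le_succ_iff.mp (by simpa using hl)) hpq1.eq
      exact ⟨w, rfl, hp⟩



section
variable (I : A ⥤ Paths G) (R : Paths G ⥤ A) (h : I ⋙ R = 𝟭 A)
include h

lemma robj (X : A) : R.obj (I.obj X) = X := Functor.congr_obj h X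

lemma rmap {X Y : A} (f : X ⟶ Y) :
    R.map (I.map f) = eqToHom (robj I R h X) ≫ f ≫ eqToHom (robj I R h Y).symm := by
  have := Functor.congr_hom h f
  simpa using this

lemma I_faithful {X Y : A} {f g : X ⟶ Y} (e : I.map f = I.map g) : f = g := by
  have hf := rmap I R h f
  have hg := rmap I R h g
  rw [e, hg] at hf
  have h2 := (eqToHom_comp_iff _ _ _).mp hf.symm
  have h3 := (comp_eqToHom_iff _ _ _).mp h2
  simpa using h3

lemma len_zero_eq {X Y : A} (f : X ⟶ Y) (hf : (I.map f).length = 0) :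
    ∃ e : X = Y, f = eqToHom e := by
  obtain ⟨e, he⟩ := path_eq_eqToHom (I.map f) hf
  refine ⟨(robj I R h X).symm.trans ((congrArg R.obj e).trans (robj I R h Y)), ?_⟩
  have h2 : f = eqToHom (robj I R h X).symm ≫ R.map (I.map f) ≫ eqToHom (robj I R h Y) := by
    rw [rmap I R h]; simp
  rw [he, eqToHom_map, eqToHom_trans, eqToHom_trans] at h2
  exact h2


/-- A morphism is indecomposable (w.r.t. the grading induced by `I`). -/
def Ind {X Y : A} (f : X ⟶ Y) : Prop :=
  (I.map f).length ≠ 0 ∧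
    ∀ ⦃Z : A⦄ (g : X ⟶ Z) (k : Z ⟶ Y), f = g ≫ k →
      (I.map g).length = 0 ∨ (I.map k).length = 0

lemma step {X Y Za Zb : A} (a : Za ⟶ Y) (b : Zb ⟶ Y) (ha : Ind I a) (hb : Ind I b)
    (u : X ⟶ Za) (v : X ⟶ Zb) (huv : u ≫ a = v ≫ b)
    (hlen : (I.map a).length ≤ (I.map b).length) :
    ∃ e : Zb = Za, b = eqToHom e ≫ a ∧ u = v ≫ eqToHom e := by
  have hI : (I.map u).comp (I.map a) = (I.map v).comp (I.map b) := by
    have := congrArg I.map huv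
    rw [I.map_comp, I.map_comp] at this
    exact this
  obtain ⟨w, hw1, hw2⟩ := path_suffix (I.map a) (I.map b) (I.map u) (I.map v) hlen hI
  -- the connecting morphism in A
  set c : Zb ⟶ Za := eqToHom (robj I R h Zb).symm ≫ R.map w ≫ eqToHom (robj I R h Za) with hc
  have hbca : b = c ≫ a := by
    have h1 : R.map (I.map b) = R.map w ≫ R.map (I.map a) := by
      rw [hw1]; exact R.map_comp _ _
    rw [rmap I R h, rmap I R h] at h1
    have : b = eqToHom (robj I R h Zb).symm ≫
        (eqToHom (robj I R h Zb) ≫ b ≫ eqToHom (robj I R h Y).symm) ≫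
        eqToHom (robj I R h Y) := by simp
    rw [this, h1, hc]
    simp
  have hcz : (I.map c).length = 0 := by
    rcases hb.2 c a hbca with h0 | h0
    · exact h0
    · exact absurd h0 ha.1
  obtain ⟨e, hce⟩ := len_zero_eq I R h c hcz
  refine ⟨e, by rw [hbca, hce], ?_⟩
  -- w has length zero
  have hwz : w.length = 0 := by
    have hlb : (I.map b).length = w.length + (I.map a).length := by
      rw [hw1]; exact Quiver.Path.length_comp _ _
    have hlb2 : (I.map b).length = (I.map a).length := by
      obtain rfl := e
      rw [hbca, hce]
      simp
    omega
  obtain ⟨e2, hwe⟩ := path_eq_eqToHom w hwz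
  apply I_faithful I R h
  rw [I.map_comp, eqToHom_map, hw2, hwe]
  congr 1


/-- Type synonym carrying the quiver of indecomposables. -/
def RV (_I : A ⥤ Paths G) : Type u := A

/-- Reinterpret a vertex as an object of `A`. -/
def RV.a {I : A ⥤ Paths G} (X : RV I) : A := X

instance : Quiver.{u} (RV I) where
  Hom X Y := {f : X.a ⟶ Y.a // Ind I f}

/-- The inclusion prefunctor. -/
def incl : RV I ⥤q A where
  obj X := X.a
  map f := f.val

/-- The comparison functor from the path category. -/
def Φ : Paths (RV I) ⥤ A := Paths.lift (incl I)

/-- Reinterpret an object of `A` as an object of the path category. -/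
def pk (I : A ⥤ Paths G) (X : A) : Paths (RV I) := X

lemma surj : ∀ (n : ℕ) {X Y : A} (f : X ⟶ Y), (I.map f).length = n →
    ∃ p : pk I X ⟶ pk I Y, (Φ I).map p = f := by
  intro n
  induction n using Nat.strong_induction_on with
  | _ n ih =>
    intro X Y f hf
    rcases Nat.eq_zero_or_pos n with rfl | hn
    · obtain ⟨e, rfl⟩ := len_zero_eq I R h f hf
      obtain rfl := e
      exact ⟨𝟙 _, rfl⟩
    by_cases hind : Ind I f
    · refine ⟨(Quiver.Hom.toPath
        (show @Quiver.Hom (RV I) _ (pk I X) (pk I Y) from ⟨f, hind⟩)), ?_⟩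
      exact Paths.lift_toPath (incl I) _
    · rw [Ind] at hind
      push_neg at hind
      obtain ⟨Z, g, k, rfl, hg, hk⟩ := hind (by omega)
      have hlen : (I.map g).length + (I.map k).length = n := by
        rw [← hf, I.map_comp]
        exact (Quiver.Path.length_comp _ _).symm
      obtain ⟨pg, hpg⟩ := ih (I.map g).length (by omega) g rfl
      obtain ⟨pk', hpk⟩ := ih (I.map k).length (by omega) k rfl
      exact ⟨pg ≫ pk', by rw [(Φ I).map_comp, hpg, hpk]; rfl⟩


omit h in
lemma phi_nil {X Y : Paths (RV I)} (q : X ⟶ Y)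
    (h0 : (I.map ((Φ I).map q)).length = 0) : ∃ e : X = Y, q = eqToHom e := by
  cases q using Quiver.Path.casesOn with
  | nil => exact ⟨rfl, rfl⟩
  | cons q a =>
    exfalso
    have hc : (Φ I).map (Quiver.Path.cons q a) = (Φ I).map q ≫ a.val := rfl
    erw [hc, I.map_comp] at h0
    have := Quiver.Path.length_comp (I.map ((Φ I).map q)) (I.map a.val)
    have ha := a.prop.1
    have h1 : (I.map ((Φ I).map q) ≫ I.map a.val).length
        = (I.map ((Φ I).map q)).length + (I.map a.val).length :=
      Quiver.Path.length_comp _ _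
    exact ha (Nat.add_eq_zero_iff.mp (h1.symm.trans h0)).2

omit h in
lemma len_comp' {X Y Z : A} (f : X ⟶ Y) (g : Y ⟶ Z) :
    (I.map (f ≫ g)).length = (I.map f).length + (I.map g).length := by
  rw [I.map_comp]; exact Quiver.Path.length_comp _ _

lemma inj : ∀ {X Y : Paths (RV I)} (p q : X ⟶ Y), (Φ I).map p = (Φ I).map q → p = q := by
  intro X Y p
  induction p using Quiver.Path.rec with
  | nil =>
    intro q he
    have h0 : (I.map ((Φ I).map q)).length = 0 := by
      erw [← he, show (Φ I).map Quiver.Path.nil = 𝟙 (X.a : A) from rfl]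
      erw [show I.map (𝟙 (X.a : A)) = 𝟙 (I.obj X.a) from I.map_id _]
      rfl
    obtain ⟨e, rfl⟩ := phi_nil I q h0
    rfl
  | @cons Z Y p' a ihp =>
    intro q he
    cases q using Quiver.Path.casesOn with
    | nil =>
      exfalso
      have h2 : (Φ I).map p' ≫ (a.val : (Z.a : A) ⟶ X.a) = 𝟙 (X.a : A) := he
      have h3 := congrArg (fun f => (I.map f).length) h2
      erw [len_comp' I] at h3
      erw [show I.map (𝟙 (X.a : A)) = 𝟙 (I.obj X.a) from I.map_id _] at h3
      have ha := a.prop.1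
      erw [show Quiver.Path.length (𝟙 (I.obj (X.a : A))) = 0 from rfl] at h3
      exact ha (Nat.add_eq_zero_iff.mp h3).2
    | @cons Z' p q' b =>
      have he' : (Φ I).map p' ≫ (a.val : (Z.a : A) ⟶ Y.a)
          = (Φ I).map q' ≫ (b.val : (Z'.a : A) ⟶ Y.a) := he
      rcases le_total (I.map a.val).length (I.map b.val).length with hl | hl
      · obtain ⟨e, hb, hu⟩ := step I R h a.val b.val a.prop b.prop
          ((Φ I).map p') ((Φ I).map q') he' hl
        have e' : Z' = Z := e
        subst e'
        rw [show (eqToHom e : (Z'.a : A) ⟶ Z'.a) = 𝟙 _ from rfl,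
          Category.id_comp] at hb
        erw [show (eqToHom e : (Z'.a : A) ⟶ Z'.a) = 𝟙 _ from rfl,
          Category.comp_id] at hu
        have hab : a = b := Subtype.ext hb.symm
        have hp'q' : p' = q' := ihp q' hu
        rw [hab, hp'q']
      · obtain ⟨e, hb, hu⟩ := step I R h b.val a.val b.prop a.prop
          ((Φ I).map q') ((Φ I).map p') he'.symm hl
        have e' : Z = Z' := e
        subst e'
        rw [show (eqToHom e : (Z.a : A) ⟶ Z.a) = 𝟙 _ from rfl,
          Category.id_comp] at hb
        erw [show (eqToHom e : (Z.a : A) ⟶ Z.a) = 𝟙 _ from rfl,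
          Category.comp_id] at hu
        have hab : a = b := Subtype.ext hb
        have hp'q' : p' = q' := ihp q' hu.symm
        rw [hab, hp'q']


noncomputable def Ψmap {X Y : A} (f : X ⟶ Y) : pk I X ⟶ pk I Y :=
  (surj I R h (I.map f).length f rfl).choose

lemma Ψmap_spec {X Y : A} (f : X ⟶ Y) : (Φ I).map (Ψmap I R h f) = f :=
  (surj I R h (I.map f).length f rfl).choose_spec

noncomputable def Ψ : A ⥤ Paths (RV I) where
  obj X := pk I X
  map f := Ψmap I R h f
  map_id X := by
    apply inj I R h
    rw [Ψmap_spec I R h]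
    rfl
  map_comp f g := by
    apply inj I R h
    rw [Ψmap_spec I R h, (Φ I).map_comp, Ψmap_spec I R h, Ψmap_spec I R h]
    rfl

lemma comp_eq_id₁ : Ψ I R h ⋙ Φ I = 𝟭 A := by
  refine CategoryTheory.Functor.ext (fun X => rfl) (fun X Y f => ?_)
  simp only [Functor.comp_map, Functor.id_map, eqToHom_refl,
    Category.id_comp, Category.comp_id]
  erw [eqToHom_refl, eqToHom_refl, Category.id_comp, Category.comp_id]
  exact Ψmap_spec I R h f

lemma comp_eq_id₂ : Φ I ⋙ Ψ I R h = 𝟭 (Paths (RV I)) := by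
  refine CategoryTheory.Functor.ext (fun X => rfl) (fun X Y p => ?_)
  simp only [Functor.comp_map, Functor.id_map, eqToHom_refl,
    Category.id_comp, Category.comp_id]
  apply inj I R h
  erw [eqToHom_refl, eqToHom_refl, Category.id_comp, Category.comp_id]
  exact Ψmap_spec I R h ((Φ I).map p)

end
end RetractFreeAux


theorem retract_of_free_category_is_free
    {A : Type u} [Category.{u} A] (G : Type u) [Quiver.{u} G]
    (I : A ⥤ Paths G) (R : Paths G ⥤ A) (h : I ⋙ R = 𝟭 A) :
    ∃ (H : Type u) (q : Quiver.{u} H),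
      Nonempty (Cat.of A ≅ @Cat.of (Paths H) (@Paths.categoryPaths H q)) := by
  refine ⟨RetractFreeAux.RV I, inferInstance, ⟨?_⟩⟩
  exact
    { hom := (RetractFreeAux.Ψ I R h).toCatHom
      inv := (RetractFreeAux.Φ I).toCatHom
      hom_inv_id := congrArg Functor.toCatHom (RetractFreeAux.comp_eq_id₁ I R h)
      inv_hom_id := congrArg Functor.toCatHom (RetractFreeAux.comp_eq_id₂ I R h) }
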